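/- For every k in the open interval (1,2) and all t in [0,1), the function f_k(t) = (t^k - k·t + k - 1)/(k(k-1)) satisfies f_k(t) ≥ (t-1)²/2. -/

import Mathlib

lemma aux_deriv (k : ℝ) (hk1 : 1 < k) (x : ℝ) (hx : 0 ≤ x) :
    HasDerivAt (fun x : ℝ => x ^ k - k * x + k - 1 - k * (k - 1) * (1 - x) ^ 2 / 2)
      (k * x ^ (k - 1) - k + k * (k - 1) * (1 - x)) x := by
  have h1 : HasDerivAt (fun x : ℝ => x ^ k) (k * x ^ (k - 1)) x := by
    have := Real.hasDerivAt_rpow_const (x := x) (p := k) (Or.inr hk1.le)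
    simpa [mul_comm] using this
  have h2 : HasDerivAt (fun x : ℝ => k * x) k x := by
    simpa using (hasDerivAt_id x).const_mul k
  have h3 : HasDerivAt (fun x : ℝ => k * (k - 1) * (1 - x) ^ 2 / 2)
      (k * (k - 1) * (2 * (1 - x) * (-1)) / 2) x := by
    have hb : HasDerivAt (fun x : ℝ => (1 - x) ^ 2) (2 * (1 - x) * (-1)) x := by
      have : HasDerivAt (fun x : ℝ => 1 - x) (-1) x := by
        simpa using (hasDerivAt_id x).const_sub 1
      simpa using this.fun_pow 2
    exact ((hb.const_mul (k * (k - 1))).div_const 2)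
  have := ((((h1.fun_sub h2).add_const (k)).sub_const 1).fun_sub h3)
  convert this using 1
  · rfl
  · rfl
  · ring

lemma aux_nonneg (k : ℝ) (hk1 : 1 < k) (hk2 : k < 2) (t : ℝ) (ht0 : 0 ≤ t) (ht1 : t ≤ 1) :
    0 ≤ t ^ k - k * t + k - 1 - k * (k - 1) * (1 - t) ^ 2 / 2 := by
  set g : ℝ → ℝ := fun x => x ^ k - k * x + k - 1 - k * (k - 1) * (1 - x) ^ 2 / 2 with hg
  have hanti : AntitoneOn g (Set.Icc 0 1) := by
    apply antitoneOn_of_deriv_nonpos (convex_Icc 0 1)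
    · exact fun x hx => ((aux_deriv k hk1 x hx.1).continuousAt).continuousWithinAt
    · intro x hx
      rw [interior_Icc] at hx
      exact ((aux_deriv k hk1 x hx.1.le).differentiableAt).differentiableWithinAt
    · intro x hx
      rw [interior_Icc] at hx
      rw [(aux_deriv k hk1 x hx.1.le).deriv]
      -- need k * x^(k-1) - k + k*(k-1)*(1-x) ≤ 0, i.e. x^(k-1) ≤ 1 + (k-1)(x-1)
      have hb : x ^ (k - 1) ≤ 1 + (k - 1) * (x - 1) := by
        have := rpow_one_add_le_one_add_mul_self (s := x - 1)
          (by linarith [hx.1.le] : (-1:ℝ) ≤ x - 1) (by linarith : (0:ℝ) ≤ k - 1)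
          (by linarith : k - 1 ≤ 1)
        simpa using this
      have hk0 : (0:ℝ) < k := by linarith
      nlinarith [hb, hk0]
  have h1 : g 1 = 0 := by simp [hg, Real.one_rpow]
  have := hanti (Set.mem_Icc.mpr ⟨ht0, ht1⟩) (Set.mem_Icc.mpr ⟨le_of_lt zero_lt_one, le_refl 1⟩) ht1
  rw [h1] at this
  exact this

/-- For `k ∈ (1,2)` and `t ∈ [0,1)`,
`f_k(t) = (t^k - k·t + k - 1)/(k(k-1)) ≥ (t-1)²/2`. -/
theorem stmt_2 (k : ℝ) (hk : k ∈ Set.Ioo (1:ℝ) 2) (t : ℝ) (ht : t ∈ Set.Ico (0:ℝ) 1) :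
    (t ^ k - k * t + k - 1) / (k * (k - 1)) ≥ (t - 1) ^ 2 / 2 := by
  obtain ⟨hk1, hk2⟩ := hk
  obtain ⟨ht0, ht1⟩ := ht
  have hpos : 0 < k * (k - 1) := by nlinarith
  have key := aux_nonneg k hk1 hk2 t ht0 ht1.le
  rw [ge_iff_le, div_le_div_iff₀ two_pos hpos]
  nlinarith [key]
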